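/- arXiv:2512.18588 — 2 statements merged into one kernel-verified Lean document; each statement's English description precedes it below -/
import Mathlib

section
/- For any finite index set T, any integrable random process (X_t)_{t∈T}, and any family of real numbers (m_t)_{t∈T}, the expected supremum E[sup_{t∈T} {X_t + m_t}] equals the supremum over all probability measures μ on T of F(X,μ) + ∫ m_t μ(dt), where F(X,μ) = sup over all couplings of X and a T-valued random variable Z with law μ of E[X_Z]. -/
open MeasureTheory ProbabilityTheory Real Filter

/-- Fernique's functional: the supremum of `E[X_Z]` over all couplings of
`P` (a law on `T → ℝ`) and `μ` (a law on `T`). -/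
noncomputable def fernique {T : Type*} [Fintype T] [MeasurableSpace T]
    (P : Measure (T → ℝ)) (μ : Measure T) : ℝ :=
  sSup { r | ∃ ρ : Measure ((T → ℝ) × T), IsProbabilityMeasure ρ ∧
      ρ.map Prod.fst = P ∧ ρ.map Prod.snd = μ ∧ r = ∫ p, p.1 p.2 ∂ρ }

/-- The expected supremum of a shifted process equals the supremum over
probability measures `μ` of `𝓕(X,μ) + ∫ m dμ`. -/
theorem stmt0 {T : Type*} [Fintype T] [Nonempty T] [MeasurableSpace T]
    [MeasurableSingletonClass T]
    {Ω : Type*} [MeasureSpace Ω] [IsProbabilityMeasure (ℙ : Measure Ω)]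
    (X : Ω → T → ℝ) (hXm : Measurable X)
    (hXint : ∀ t, Integrable (fun ω => X ω t) ℙ) (m : T → ℝ) :
    ∫ ω, ⨆ t, (X ω t + m t) ∂ℙ =
      sSup { r | ∃ μ : Measure T, IsProbabilityMeasure μ ∧
        r = fernique (Measure.map X ℙ) μ + ∫ t, m t ∂μ } := by
  classical
  letI : LinearOrder T := LinearOrder.lift' (Fintype.equivFin T) (Fintype.equivFin T).injective
  set P : Measure (T → ℝ) := Measure.map X ℙ with hPdef
  haveI hPprob : IsProbabilityMeasure P := Measure.isProbabilityMeasure_map hXm.aemeasurable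
  have hgt : ∀ t : T, Measurable fun x : T → ℝ => x t + m t := fun t =>
    (measurable_pi_apply t).add_const _
  have hEval : Measurable fun p : (T → ℝ) × T => p.1 p.2 :=
    measurable_from_prod_countable_left fun t => measurable_pi_apply t
  have habs : ∀ (x : T → ℝ) (t : T), |x t| ≤ ∑ s, |x s| := fun x t =>
    Finset.single_le_sum (f := fun s => |x s|) (fun i _ => abs_nonneg _) (Finset.mem_univ t)
  -- measurable argmax selection on `T → ℝ`
  have hAne : ∀ x : T → ℝ, (Finset.univ.filter fun t => ∀ s, x s + m s ≤ x t + m t).Nonempty := by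
    intro x
    obtain ⟨t, -, ht⟩ := Finset.exists_max_image Finset.univ (fun t => x t + m t)
      Finset.univ_nonempty
    exact ⟨t, Finset.mem_filter.2 ⟨Finset.mem_univ _, fun s => ht s (Finset.mem_univ s)⟩⟩
  set W : (T → ℝ) → T :=
    fun x => (Finset.univ.filter fun t => ∀ s, x s + m s ≤ x t + m t).min' (hAne x) with hWdef
  have hWmax : ∀ (x : T → ℝ) (s : T), x s + m s ≤ x (W x) + m (W x) := by
    intro x s
    have h := Finset.min'_mem _ (hAne x)
    rw [Finset.mem_filter] at h
    exact h.2 s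
  have hWle : ∀ (x : T → ℝ) (t : T), (∀ s, x s + m s ≤ x t + m t) → W x ≤ t := fun x t ht =>
    Finset.min'_le _ _ (Finset.mem_filter.2 ⟨Finset.mem_univ _, ht⟩)
  have hWm : Measurable W := by
    apply measurable_to_countable'
    intro t
    have hset : W ⁻¹' {t} =
        (⋂ s, {x : T → ℝ | x s + m s ≤ x t + m t}) ∩
          ⋂ s, {x : T → ℝ | (∀ u, x u + m u ≤ x s + m s) → t ≤ s} := by
      ext x
      simp only [Set.mem_preimage, Set.mem_singleton_iff, Set.mem_inter_iff, Set.mem_iInter,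
        Set.mem_setOf_eq]
      constructor
      · rintro rfl
        exact ⟨fun s => hWmax x s, fun s hs => hWle x s hs⟩
      · rintro ⟨h1, h2⟩
        exact le_antisymm (hWle x t h1) (h2 _ fun u => hWmax x u)
    rw [hset]
    refine (MeasurableSet.iInter fun s => measurableSet_le (hgt s) (hgt t)).inter
      (MeasurableSet.iInter fun s => ?_)
    by_cases h : t ≤ s
    · have heq : {x : T → ℝ | (∀ u, x u + m u ≤ x s + m s) → t ≤ s} = Set.univ := by
        ext x; simp [h]
      rw [heq]; exact MeasurableSet.univ
    · have heq : {x : T → ℝ | (∀ u, x u + m u ≤ x s + m s) → t ≤ s} =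
          (⋂ u, {x : T → ℝ | x u + m u ≤ x s + m s})ᶜ := by
        ext x; simp [h]
      rw [heq]
      exact (MeasurableSet.iInter fun u => measurableSet_le (hgt u) (hgt s)).compl
  have hsupx : ∀ x : T → ℝ, (⨆ t, (x t + m t)) = x (W x) + m (W x) := fun x =>
    le_antisymm (ciSup_le fun s => hWmax x s)
      (le_ciSup (f := fun t => x t + m t) (Set.Finite.bddAbove (Set.finite_range _)) (W x))
  have hGxm : Measurable fun x : T → ℝ => ⨆ t, (x t + m t) := by
    have heq : (fun x : T → ℝ => ⨆ t, (x t + m t)) = fun x => x (W x) + m (W x) := funext hsupx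
    rw [heq]
    exact (hEval.comp (measurable_id.prodMk hWm)).add ((measurable_of_finite m).comp hWm)
  have hSAm : Measurable fun x : T → ℝ => ∑ s, |x s| :=
    Finset.measurable_sum _ fun t _ => (measurable_pi_apply t).abs
  have hevalP : ∀ t, Integrable (fun x : T → ℝ => x t) P := by
    intro t
    rw [hPdef,
      integrable_map_measure (measurable_pi_apply t).aestronglyMeasurable hXm.aemeasurable]
    exact hXint t
  have hSA : Integrable (fun x : T → ℝ => ∑ s, |x s|) P :=
    integrable_finset_sum _ fun t _ => (hevalP t).abs
  have hSAnn : 0 ≤ ∫ x, ∑ s, |x s| ∂P :=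
    integral_nonneg fun x => Finset.sum_nonneg fun s _ => abs_nonneg _
  have hGxint : Integrable (fun x : T → ℝ => ⨆ t, (x t + m t)) P := by
    refine Integrable.mono' (hSA.add (integrable_const (∑ s, |m s|))) hGxm.aestronglyMeasurable
      (ae_of_all _ fun x => ?_)
    rw [Real.norm_eq_abs, hsupx x]
    exact (abs_add_le _ _).trans (add_le_add (habs x _) (habs m _))
  -- generic facts about couplings
  have hcoup : ∀ ρ : Measure ((T → ℝ) × T), IsProbabilityMeasure ρ → ρ.map Prod.fst = P →
      Integrable (fun p : (T → ℝ) × T => p.1 p.2) ρ ∧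
      Integrable (fun p : (T → ℝ) × T => m p.2) ρ ∧
      (∫ p, p.1 p.2 ∂ρ) ≤ (∫ x, ∑ s, |x s| ∂P) ∧
      (∫ p, (p.1 p.2 + m p.2) ∂ρ) ≤ ∫ x, ⨆ t, (x t + m t) ∂P := by
    intro ρ hρ hfst
    have hSAρ : Integrable (fun p : (T → ℝ) × T => ∑ s, |p.1 s|) ρ := by
      have h := hSA
      rw [← hfst, integrable_map_measure hSAm.aestronglyMeasurable measurable_fst.aemeasurable] at h
      exact h
    have hXZρ : Integrable (fun p : (T → ℝ) × T => p.1 p.2) ρ := by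
      refine Integrable.mono' hSAρ hEval.aestronglyMeasurable (ae_of_all _ fun p => ?_)
      rw [Real.norm_eq_abs]; exact habs p.1 p.2
    have hGρ : Integrable (fun p : (T → ℝ) × T => ⨆ t, (p.1 t + m t)) ρ := by
      have h := hGxint
      rw [← hfst, integrable_map_measure hGxm.aestronglyMeasurable measurable_fst.aemeasurable] at h
      exact h
    have hmρ : Integrable (fun p : (T → ℝ) × T => m p.2) ρ := by
      refine Integrable.mono' (integrable_const (∑ s, |m s|))
        (((measurable_of_finite m).comp measurable_snd).aestronglyMeasurable)
        (ae_of_all _ fun p => ?_)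
      rw [Real.norm_eq_abs]; exact habs m p.2
    refine ⟨hXZρ, hmρ, ?_, ?_⟩
    · calc (∫ p, p.1 p.2 ∂ρ) ≤ ∫ p, ∑ s, |p.1 s| ∂ρ :=
            integral_mono hXZρ hSAρ fun p => (le_abs_self _).trans (habs p.1 p.2)
        _ = ∫ x, ∑ s, |x s| ∂P := by
            rw [← hfst, integral_map measurable_fst.aemeasurable hSAm.aestronglyMeasurable]
    · calc (∫ p, (p.1 p.2 + m p.2) ∂ρ) ≤ ∫ p, ⨆ t, (p.1 t + m t) ∂ρ := by
            refine integral_mono (hXZρ.add hmρ) hGρ fun p => ?_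
            exact le_ciSup (f := fun t => p.1 t + m t) (Set.Finite.bddAbove (Set.finite_range _)) p.2
        _ = ∫ x, ⨆ t, (x t + m t) ∂P := by
            rw [← hfst, integral_map measurable_fst.aemeasurable hGxm.aestronglyMeasurable]
  -- the optimal coupling
  set Z : Ω → T := fun ω => W (X ω) with hZdef
  have hZm : Measurable Z := hWm.comp hXm
  have hpair : Measurable fun ω => (X ω, Z ω) := hXm.prodMk hZm
  set μ0 : Measure T := Measure.map Z ℙ with hμ0def
  haveI hμ0prob : IsProbabilityMeasure μ0 := Measure.isProbabilityMeasure_map hZm.aemeasurable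
  set ρ0 : Measure ((T → ℝ) × T) := Measure.map (fun ω => (X ω, Z ω)) ℙ with hρ0def
  haveI hρ0prob : IsProbabilityMeasure ρ0 := Measure.isProbabilityMeasure_map hpair.aemeasurable
  have hρ0fst : ρ0.map Prod.fst = P := by
    rw [hρ0def, Measure.map_map measurable_fst hpair, hPdef]; rfl
  have hρ0snd : ρ0.map Prod.snd = μ0 := by
    rw [hρ0def, Measure.map_map measurable_snd hpair, hμ0def]; rfl
  have hXZint : Integrable (fun ω => X ω (Z ω)) ℙ := by
    have hSAX : Integrable (fun ω => ∑ s, |X ω s|) ℙ :=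
      integrable_finset_sum _ fun t _ => (hXint t).abs
    refine Integrable.mono' hSAX ((hEval.comp hpair).aestronglyMeasurable)
      (ae_of_all _ fun ω => ?_)
    rw [Real.norm_eq_abs]; exact habs (X ω) (Z ω)
  have hmZint : Integrable (fun ω => m (Z ω)) ℙ := by
    refine Integrable.mono' (integrable_const (∑ s, |m s|))
      (((measurable_of_finite m).comp hZm).aestronglyMeasurable) (ae_of_all _ fun ω => ?_)
    rw [Real.norm_eq_abs]; exact habs m (Z ω)
  have hc0 : (∫ p, p.1 p.2 ∂ρ0) = ∫ ω, X ω (Z ω) ∂ℙ := by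
    rw [hρ0def, integral_map hpair.aemeasurable hEval.aestronglyMeasurable]
  have hmμ0 : (∫ t, m t ∂μ0) = ∫ ω, m (Z ω) ∂ℙ := by
    rw [hμ0def, integral_map hZm.aemeasurable (measurable_of_finite m).aestronglyMeasurable]
  have hLHS : (∫ ω, ⨆ t, (X ω t + m t) ∂ℙ) = (∫ ω, X ω (Z ω) ∂ℙ) + ∫ t, m t ∂μ0 := by
    rw [hmμ0, ← integral_add hXZint hmZint]
    exact integral_congr_ae (ae_of_all _ fun ω => hsupx (X ω))
  -- boundedness
  have hBddS : ∀ μ : Measure T,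
      ∀ r ∈ {r : ℝ | ∃ ρ : Measure ((T → ℝ) × T), IsProbabilityMeasure ρ ∧
        ρ.map Prod.fst = P ∧ ρ.map Prod.snd = μ ∧ r = ∫ p, p.1 p.2 ∂ρ},
      r ≤ ∫ x, ∑ s, |x s| ∂P := by
    rintro μ r ⟨ρ, hρ, hfst, -, rfl⟩
    exact (hcoup ρ hρ hfst).2.2.1
  have hmint : ∀ μ : Measure T, IsProbabilityMeasure μ → (∫ t, m t ∂μ) ≤ ∑ s, |m s| := by
    intro μ hμ
    calc (∫ t, m t ∂μ) ≤ ∫ _t, ∑ s, |m s| ∂μ :=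
          integral_mono .of_finite (integrable_const _) fun t => (le_abs_self _).trans (habs m t)
      _ = ∑ s, |m s| := by simp
  have hfernique_le : ∀ μ : Measure T, fernique P μ ≤ ∫ x, ∑ s, |x s| ∂P := fun μ =>
    Real.sSup_le (hBddS μ) hSAnn
  have hRHSbdd : BddAbove {r : ℝ | ∃ μ : Measure T, IsProbabilityMeasure μ ∧
      r = fernique P μ + ∫ t, m t ∂μ} := by
    refine ⟨(∫ x, ∑ s, |x s| ∂P) + ∑ s, |m s|, ?_⟩
    rintro r ⟨μ, hμ, rfl⟩
    exact add_le_add (hfernique_le μ) (hmint μ hμ)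
  refine le_antisymm ?_ ?_
  · -- LHS ≤ sSup
    have h1 : (∫ ω, X ω (Z ω) ∂ℙ) ≤ fernique P μ0 :=
      le_csSup ⟨_, hBddS μ0⟩ ⟨ρ0, hρ0prob, hρ0fst, hρ0snd, hc0.symm⟩
    have h2 : fernique P μ0 + (∫ t, m t ∂μ0) ≤ sSup {r : ℝ | ∃ μ : Measure T,
        IsProbabilityMeasure μ ∧ r = fernique P μ + ∫ t, m t ∂μ} :=
      le_csSup hRHSbdd ⟨μ0, hμ0prob, rfl⟩
    rw [hLHS]
    exact le_trans (add_le_add_left h1 _) h2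
  · -- sSup ≤ LHS
    refine csSup_le ⟨fernique P μ0 + ∫ t, m t ∂μ0, μ0, hμ0prob, rfl⟩ ?_
    rintro r ⟨μ, hμ, rfl⟩
    haveI := hμ
    have hprodfst : (P.prod μ).map Prod.fst = P := by simp
    have hprodsnd : (P.prod μ).map Prod.snd = μ := by simp
    have hfle : fernique P μ ≤ (∫ ω, ⨆ t, (X ω t + m t) ∂ℙ) - ∫ t, m t ∂μ := by
      refine csSup_le ⟨_, P.prod μ, inferInstance, hprodfst, hprodsnd, rfl⟩ ?_
      rintro b ⟨ρ, hρ, hfst, hsnd, rfl⟩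
      obtain ⟨hint, hmρ, -, hle⟩ := hcoup ρ hρ hfst
      have hmeq : (∫ p : (T → ℝ) × T, m p.2 ∂ρ) = ∫ t, m t ∂μ := by
        rw [← hsnd,
          integral_map measurable_snd.aemeasurable (measurable_of_finite m).aestronglyMeasurable]
      have hGP : (∫ x, ⨆ t, (x t + m t) ∂P) = ∫ ω, ⨆ t, (X ω t + m t) ∂ℙ := by
        rw [hPdef, integral_map hXm.aemeasurable hGxm.aestronglyMeasurable]
      rw [integral_add hint hmρ, hmeq, hGP] at hle
      linarith
    linarith
end

section
/- Fernique's functional is 1-Lipschitz with respect to the Wasserstein-1 distance in its first argument: for any finite set T, any probability measure μ on T, and any probability measures P, P' on R^T with finite first moment (with respect to the sup norm), |F(P,μ) − F(P',μ)| ≤ W_1(P,P'), where W_1 is the Wasserstein distance with respect to the sup norm ‖x‖ = max_{t∈T}|x_t|. -/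
open MeasureTheory ProbabilityTheory Real Filter

/-- Wasserstein-1 distance on `T → ℝ` with the sup norm. -/
noncomputable def wass1 {T : Type*} [Fintype T]
    (P P' : Measure (T → ℝ)) : ℝ :=
  sInf { r | ∃ ρ : Measure ((T → ℝ) × (T → ℝ)), IsProbabilityMeasure ρ ∧
      ρ.map Prod.fst = P ∧ ρ.map Prod.snd = P' ∧ r = ∫ p, ‖p.1 - p.2‖ ∂ρ }

section Aux

variable {T : Type*} [Fintype T] [Nonempty T] [MeasurableSpace T] [MeasurableSingletonClass T]

omit [Nonempty T] in
lemma meas_eval : Measurable (fun p : (T → ℝ) × T => p.1 p.2) := by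
  classical
  have : (fun p : (T → ℝ) × T => p.1 p.2)
      = fun p => ∑ t : T, if p.2 = t then p.1 t else 0 := by
    funext p; rw [Finset.sum_ite_eq (Finset.univ) p.2 (fun t => p.1 t)]; simp
  rw [this]
  exact Finset.measurable_sum _ fun t _ => Measurable.ite
    (measurable_snd (MeasurableSet.singleton t)) ((measurable_pi_apply t).comp measurable_fst)
    measurable_const

omit [Nonempty T] in
/-- Any element of the Fernique set is bounded by the first moment. -/
lemma fernique_set_bddAbove (P : Measure (T → ℝ)) (μ : Measure T)
    [IsProbabilityMeasure P] (hP : Integrable (fun x => ‖x‖) P) :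
    ∀ r ∈ { r | ∃ ρ : Measure ((T → ℝ) × T), IsProbabilityMeasure ρ ∧
      ρ.map Prod.fst = P ∧ ρ.map Prod.snd = μ ∧ r = ∫ p, p.1 p.2 ∂ρ },
      r ≤ ∫ x, ‖x‖ ∂P := by
  rintro r ⟨ρ, hprob, hfst, hsnd, rfl⟩
  have hnorm : Integrable (fun p : (T → ℝ) × T => ‖p.1‖) ρ := by
    have := (integrable_map_measure (f := (Prod.fst : (T → ℝ) × T → (T → ℝ)))
      (g := fun x => ‖x‖) (by rw [hfst]; exact hP.1) measurable_fst.aemeasurable).mp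
      (by rw [hfst]; exact hP)
    exact this
  have hint : Integrable (fun p : (T → ℝ) × T => p.1 p.2) ρ := by
    refine hnorm.mono meas_eval.aestronglyMeasurable (Filter.Eventually.of_forall fun p => ?_)
    rw [norm_norm]
    exact norm_le_pi_norm p.1 p.2
  calc ∫ p, p.1 p.2 ∂ρ ≤ ∫ p, ‖p.1‖ ∂ρ := by
        refine integral_mono hint hnorm fun p => ?_
        exact (le_abs_self _).trans (norm_le_pi_norm p.1 p.2)
    _ = ∫ x, ‖x‖ ∂P := by
        rw [← hfst,
          integral_map measurable_fst.aemeasurable (by rw [hfst]; exact hP.1)]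

omit [Nonempty T] in
lemma fernique_set_nonempty (P : Measure (T → ℝ)) (μ : Measure T)
    [IsProbabilityMeasure P] [IsProbabilityMeasure μ] :
    Set.Nonempty { r | ∃ ρ : Measure ((T → ℝ) × T), IsProbabilityMeasure ρ ∧
      ρ.map Prod.fst = P ∧ ρ.map Prod.snd = μ ∧ r = ∫ p, p.1 p.2 ∂ρ } := by
  refine ⟨∫ p, p.1 p.2 ∂(P.prod μ), P.prod μ, by infer_instance, ?_, ?_, rfl⟩
  · rw [Measure.map_fst_prod]; simp
  · rw [Measure.map_snd_prod]; simp

/-- The gluing construction: composing a coupling of `(P, P')` with the conditional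
kernel of a coupling of `(P', μ)` recovers the latter coupling as a marginal. -/
lemma glue_marginal (ρ₁ : Measure ((T→ℝ) × (T→ℝ))) [IsProbabilityMeasure ρ₁]
    (ρ₂ : Measure ((T→ℝ) × T)) [IsProbabilityMeasure ρ₂]
    (h2 : ρ₁.map Prod.snd = ρ₂.map Prod.fst) :
    (ρ₁ ⊗ₘ (ρ₂.condKernel.comap (Prod.snd : (T→ℝ)×(T→ℝ) → (T→ℝ)) measurable_snd)).map
      (fun q => (q.1.2, q.2)) = ρ₂ := by
  set κ := ρ₂.condKernel with hκ
  set κ' := κ.comap (Prod.snd : (T→ℝ)×(T→ℝ) → (T→ℝ)) measurable_snd with hκ'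
  have hfst : ρ₂.fst = ρ₁.map Prod.snd := by rw [h2]; rfl
  have hdis : (ρ₁.map Prod.snd) ⊗ₘ κ = ρ₂ := by rw [← hfst, hκ]; exact ρ₂.disintegrate _
  have hF : Measurable (fun q : ((T→ℝ)×(T→ℝ))×T => (q.1.2, q.2)) :=
    (measurable_snd.comp measurable_fst).prodMk measurable_snd
  have : IsProbabilityMeasure (ρ₁ ⊗ₘ κ') := by infer_instance
  refine ext_of_generate_finite _ generateFrom_prod.symm isPiSystem_prod ?_ ?_
  · rintro u ⟨s, hs, t, ht, rfl⟩
    simp only [Set.mem_setOf_eq] at hs ht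
    rw [Measure.map_apply hF (hs.prod ht)]
    have hpre : (fun q : ((T→ℝ)×(T→ℝ))×T => (q.1.2, q.2)) ⁻¹' (s ×ˢ t)
        = (Set.univ ×ˢ s) ×ˢ t := by
      ext q; simp [Set.mem_prod]
    rw [hpre, Measure.compProd_apply_prod (MeasurableSet.univ.prod hs) ht]
    have step : ∫⁻ a in Set.univ ×ˢ s, κ' a t ∂ρ₁
        = ∫⁻ a, s.indicator (fun x => κ x t) a.2 ∂ρ₁ := by
      rw [← lintegral_indicator (MeasurableSet.univ.prod hs)]
      congr 1; funext a
      by_cases h : a.2 ∈ s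
      · simp [Set.indicator_of_mem, h, Set.mem_prod, hκ', Kernel.comap_apply]
      · simp [Set.indicator_of_notMem, h, Set.mem_prod]
    rw [step, ← lintegral_map ((κ.measurable_coe ht).indicator hs) measurable_snd,
      lintegral_indicator hs, ← Measure.compProd_apply_prod hs ht, hdis]
  · rw [Measure.map_apply hF MeasurableSet.univ]; simp

/-- Key step: given a coupling of `(P, P')`, Fernique's functional of `P'` is bounded
by that of `P` plus the transport cost of the coupling. -/
lemma fernique_le_of_coupling (P P' : Measure (T → ℝ)) (μ : Measure T)
    [IsProbabilityMeasure P] [IsProbabilityMeasure P'] [IsProbabilityMeasure μ]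
    (hP : Integrable (fun x => ‖x‖) P) (hP' : Integrable (fun x => ‖x‖) P')
    (ρ₁ : Measure ((T→ℝ) × (T→ℝ))) [IsProbabilityMeasure ρ₁]
    (h1 : ρ₁.map Prod.fst = P) (h2 : ρ₁.map Prod.snd = P') :
    fernique P' μ ≤ fernique P μ + ∫ p, ‖p.1 - p.2‖ ∂ρ₁ := by
  refine csSup_le (fernique_set_nonempty P' μ) ?_
  rintro r₂ ⟨ρ₂, hρ₂prob, hρ₂fst, hρ₂snd, rfl⟩
  set κ' := ρ₂.condKernel.comap (Prod.snd : (T→ℝ)×(T→ℝ) → (T→ℝ)) measurable_snd with hκ'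
  set ρ₃ := ρ₁ ⊗ₘ κ' with hρ₃
  have hglue : ρ₃.map (fun q => (q.1.2, q.2)) = ρ₂ :=
    glue_marginal ρ₁ ρ₂ (by rw [h2, hρ₂fst])
  have hρ₃prob : IsProbabilityMeasure ρ₃ := by rw [hρ₃]; infer_instance
  have hρ₃fst : ρ₃.map Prod.fst = ρ₁ := Measure.fst_compProd ρ₁ κ'
  -- measurability of the three integrands
  have hm1 : Measurable (fun q : ((T→ℝ)×(T→ℝ))×T => q.1.1 q.2) :=
    meas_eval.comp ((measurable_fst.comp measurable_fst).prodMk measurable_snd)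
  have hm2 : Measurable (fun q : ((T→ℝ)×(T→ℝ))×T => q.1.2 q.2) :=
    meas_eval.comp ((measurable_snd.comp measurable_fst).prodMk measurable_snd)
  have hm3 : Measurable (fun q : ((T→ℝ)×(T→ℝ))×T => ‖q.1.1 - q.1.2‖) :=
    ((measurable_fst.comp measurable_fst).sub (measurable_snd.comp measurable_fst)).norm
  -- integrability of the norms of the marginals
  have hmapP : ρ₃.map (fun q : ((T→ℝ)×(T→ℝ))×T => q.1.1) = P := by
    rw [show (fun q : ((T→ℝ)×(T→ℝ))×T => q.1.1) = Prod.fst ∘ Prod.fst from rfl,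
      ← Measure.map_map measurable_fst measurable_fst, hρ₃fst, h1]
  have hmapP' : ρ₃.map (fun q : ((T→ℝ)×(T→ℝ))×T => q.1.2) = P' := by
    rw [show (fun q : ((T→ℝ)×(T→ℝ))×T => q.1.2) = Prod.snd ∘ Prod.fst from rfl,
      ← Measure.map_map measurable_snd measurable_fst, hρ₃fst, h2]
  have hmF1 : Measurable (fun q : ((T→ℝ)×(T→ℝ))×T => q.1.1) :=
    measurable_fst.comp measurable_fst
  have hmF2 : Measurable (fun q : ((T→ℝ)×(T→ℝ))×T => q.1.2) :=
    measurable_snd.comp measurable_fst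
  have hN1 : Integrable (fun q : ((T→ℝ)×(T→ℝ))×T => ‖q.1.1‖) ρ₃ :=
    (integrable_map_measure (f := fun q : ((T→ℝ)×(T→ℝ))×T => q.1.1) (g := fun x => ‖x‖)
      (by rw [hmapP]; exact hP.1) hmF1.aemeasurable).mp (by rw [hmapP]; exact hP)
  have hN2 : Integrable (fun q : ((T→ℝ)×(T→ℝ))×T => ‖q.1.2‖) ρ₃ :=
    (integrable_map_measure (f := fun q : ((T→ℝ)×(T→ℝ))×T => q.1.2) (g := fun x => ‖x‖)
      (by rw [hmapP']; exact hP'.1) hmF2.aemeasurable).mp (by rw [hmapP']; exact hP')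
  have hI1 : Integrable (fun q : ((T→ℝ)×(T→ℝ))×T => q.1.1 q.2) ρ₃ := by
    refine hN1.mono hm1.aestronglyMeasurable (Filter.Eventually.of_forall fun q => ?_)
    simp only [norm_norm]
    exact norm_le_pi_norm q.1.1 q.2
  have hI2 : Integrable (fun q : ((T→ℝ)×(T→ℝ))×T => q.1.2 q.2) ρ₃ := by
    refine hN2.mono hm2.aestronglyMeasurable (Filter.Eventually.of_forall fun q => ?_)
    simp only [norm_norm]
    exact norm_le_pi_norm q.1.2 q.2
  have hI3 : Integrable (fun q : ((T→ℝ)×(T→ℝ))×T => ‖q.1.1 - q.1.2‖) ρ₃ := by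
    refine (hN1.add hN2).mono hm3.aestronglyMeasurable
      (Filter.Eventually.of_forall fun q => ?_)
    simp only [norm_norm, Real.norm_eq_abs]
    rw [abs_of_nonneg (by positivity)]
    exact (norm_sub_le _ _).trans (le_abs_self _)
  -- the new coupling of (P, μ)
  have hG : Measurable (fun q : ((T→ℝ)×(T→ℝ))×T => (q.1.1, q.2)) :=
    (measurable_fst.comp measurable_fst).prodMk measurable_snd
  have hF : Measurable (fun q : ((T→ℝ)×(T→ℝ))×T => (q.1.2, q.2)) :=
    (measurable_snd.comp measurable_fst).prodMk measurable_snd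
  set ρ := ρ₃.map (fun q => (q.1.1, q.2)) with hρ
  have hρprob : IsProbabilityMeasure ρ := Measure.isProbabilityMeasure_map hG.aemeasurable
  have hρfst : ρ.map Prod.fst = P := by
    rw [hρ, Measure.map_map measurable_fst hG]; exact hmapP
  have hρsnd : ρ.map Prod.snd = μ := by
    rw [hρ, Measure.map_map measurable_snd hG,
      show (Prod.snd ∘ fun q : ((T→ℝ)×(T→ℝ))×T => (q.1.1, q.2))
        = Prod.snd ∘ (fun q : ((T→ℝ)×(T→ℝ))×T => (q.1.2, q.2)) from rfl,
      ← Measure.map_map measurable_snd hF, hglue, hρ₂snd]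
  -- identify the three integrals as integrals over ρ₃
  have hr₂ : ∫ p, p.1 p.2 ∂ρ₂ = ∫ q, q.1.2 q.2 ∂ρ₃ := by
    rw [← hglue, integral_map hF.aemeasurable
      (by rw [hglue]; exact meas_eval.aestronglyMeasurable)]
  have hr₃ : ∫ p, p.1 p.2 ∂ρ = ∫ q, q.1.1 q.2 ∂ρ₃ := by
    rw [hρ, integral_map hG.aemeasurable
      (by rw [← hρ]; exact meas_eval.aestronglyMeasurable)]
  have hr₁ : ∫ p, ‖p.1 - p.2‖ ∂ρ₁ = ∫ q, ‖q.1.1 - q.1.2‖ ∂ρ₃ := by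
    rw [← hρ₃fst, integral_map measurable_fst.aemeasurable
      (by rw [hρ₃fst]; exact (measurable_fst.sub measurable_snd).norm.aestronglyMeasurable)]
  -- the pointwise comparison
  have hcmp : ∫ q, q.1.2 q.2 ∂ρ₃ ≤ ∫ q, q.1.1 q.2 ∂ρ₃ + ∫ q, ‖q.1.1 - q.1.2‖ ∂ρ₃ := by
    rw [← integral_add hI1 hI3]
    refine integral_mono hI2 (hI1.add hI3) fun q => ?_
    have h := norm_le_pi_norm (q.1.1 - q.1.2) q.2
    simp only [Pi.sub_apply, Real.norm_eq_abs] at h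
    have := neg_abs_le (q.1.1 q.2 - q.1.2 q.2)
    linarith [abs_le_abs (le_refl (q.1.1 q.2 - q.1.2 q.2))]
  -- conclude
  have hmem : ∫ p, p.1 p.2 ∂ρ ∈ { r | ∃ ρ : Measure ((T → ℝ) × T), IsProbabilityMeasure ρ ∧
      ρ.map Prod.fst = P ∧ ρ.map Prod.snd = μ ∧ r = ∫ p, p.1 p.2 ∂ρ } :=
    ⟨ρ, hρprob, hρfst, hρsnd, rfl⟩
  have hle : ∫ p, p.1 p.2 ∂ρ ≤ fernique P μ :=
    le_csSup ⟨∫ x, ‖x‖ ∂P, fernique_set_bddAbove P μ hP⟩ hmem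
  calc ∫ p, p.1 p.2 ∂ρ₂ = ∫ q, q.1.2 q.2 ∂ρ₃ := hr₂
    _ ≤ ∫ q, q.1.1 q.2 ∂ρ₃ + ∫ q, ‖q.1.1 - q.1.2‖ ∂ρ₃ := hcmp
    _ = ∫ p, p.1 p.2 ∂ρ + ∫ p, ‖p.1 - p.2‖ ∂ρ₁ := by rw [hr₃, hr₁]
    _ ≤ fernique P μ + ∫ p, ‖p.1 - p.2‖ ∂ρ₁ := by linarith

end Aux

/-- Fernique's functional is 1-Lipschitz in its first argument for `W₁`. -/
theorem stmt1 {T : Type*} [Fintype T] [Nonempty T] [MeasurableSpace T]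
    [MeasurableSingletonClass T]
    (P P' : Measure (T → ℝ)) (μ : Measure T)
    [IsProbabilityMeasure P] [IsProbabilityMeasure P'] [IsProbabilityMeasure μ]
    (hP : Integrable (fun x => ‖x‖) P) (hP' : Integrable (fun x => ‖x‖) P') :
    |fernique P μ - fernique P' μ| ≤ wass1 P P' := by
  refine le_csInf ?_ ?_
  · -- the product coupling witnesses nonemptiness
    refine ⟨∫ p, ‖p.1 - p.2‖ ∂(P.prod P'), P.prod P', by infer_instance, ?_, ?_, rfl⟩
    · rw [Measure.map_fst_prod]; simp
    · rw [Measure.map_snd_prod]; simp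
  · rintro r ⟨ρ₁, hρ₁prob, h1, h2, rfl⟩
    have hA : fernique P' μ ≤ fernique P μ + ∫ p, ‖p.1 - p.2‖ ∂ρ₁ :=
      fernique_le_of_coupling P P' μ hP hP' ρ₁ h1 h2
    -- the swapped coupling
    have hswapprob : IsProbabilityMeasure (ρ₁.map Prod.swap) :=
      Measure.isProbabilityMeasure_map measurable_swap.aemeasurable
    have hsfst : (ρ₁.map Prod.swap).map Prod.fst = P' := by
      rw [Measure.map_map measurable_fst measurable_swap]
      exact h2
    have hssnd : (ρ₁.map Prod.swap).map Prod.snd = P := by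
      rw [Measure.map_map measurable_snd measurable_swap]
      exact h1
    have hsint : ∫ p, ‖p.1 - p.2‖ ∂(ρ₁.map Prod.swap) = ∫ p, ‖p.1 - p.2‖ ∂ρ₁ := by
      rw [integral_map measurable_swap.aemeasurable (f := fun p : (T → ℝ) × (T → ℝ) => ‖p.1 - p.2‖)
        (measurable_fst.sub measurable_snd).norm.aestronglyMeasurable]
      simp only [Prod.snd_swap, Prod.fst_swap]
      congr 1; funext p; rw [norm_sub_rev]
    have hB : fernique P μ ≤ fernique P' μ + ∫ p, ‖p.1 - p.2‖ ∂ρ₁ := by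
      have := fernique_le_of_coupling P' P μ hP' hP (ρ₁.map Prod.swap) hsfst hssnd
      rwa [hsint] at this
    rw [abs_sub_le_iff]
    constructor <;> linarith
end
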